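/- For integers 1 ≤ q ≤ m ≤ n, ∑_{k=q+1}^{m} C(m,k) C(n-m, m-k) (k/m) = ∑_{k=q}^{m-1} C(m-1,k) C(n-m, m-1-k) ≤ C(m-1,q) C(n-q-1, m-q-1), and hence C(n,m)^{-1} ∑_{k=q+1}^m C(m,k) C(n-m,m-k) (k/m) ≤ C(m-1,q) (m/n)^{q+1}. -/

import Mathlib

open Finset

private lemma aux1 (u v j : ℕ) (hu : 1 ≤ u) (huv : u ≤ v) :
    (v - 1).choose (u - 1) * (j + v) ≤ v.choose u * (j + u) := by
  obtain ⟨u', rfl⟩ : ∃ u', u = u' + 1 := ⟨u - 1, by omega⟩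
  obtain ⟨v', rfl⟩ : ∃ v', v = v' + 1 := ⟨v - 1, by omega⟩
  simp only [Nat.add_sub_cancel]
  have h := Nat.add_one_mul_choose_eq v' u'
  have h2 : v'.choose u' ≤ (v' + 1).choose (u' + 1) := by
    rw [Nat.choose_succ_succ]; omega
  nlinarith [h, h2]

private lemma aux2 : ∀ q m n : ℕ, q + 1 ≤ m → m ≤ n →
    (n - (q + 1)).choose (m - (q + 1)) * n ^ (q + 1) ≤ n.choose m * m ^ (q + 1) := by
  intro q
  induction q with
  | zero =>
    intro m n h1 h2
    obtain ⟨m', rfl⟩ : ∃ m', m = m' + 1 := ⟨m - 1, by omega⟩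
    obtain ⟨n', rfl⟩ : ∃ n', n = n' + 1 := ⟨n - 1, by omega⟩
    simp only [Nat.add_sub_cancel, pow_one, zero_add]
    have h := Nat.add_one_mul_choose_eq n' m'
    nlinarith [h]
  | succ q ih =>
    intro m n h1 h2
    have step := aux1 (m - (q + 1)) (n - (q + 1)) (q + 1) (by omega) (by omega)
    have e1 : (q + 1) + (n - (q + 1)) = n := by omega
    have e2 : (q + 1) + (m - (q + 1)) = m := by omega
    have e3 : n - (q + 1) - 1 = n - (q + 1 + 1) := by omega
    have e4 : m - (q + 1) - 1 = m - (q + 1 + 1) := by omega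
    rw [e1, e2, e3, e4] at step
    calc (n - (q + 1 + 1)).choose (m - (q + 1 + 1)) * n ^ (q + 1 + 1)
        = ((n - (q + 1 + 1)).choose (m - (q + 1 + 1)) * n) * n ^ (q + 1) := by ring
      _ ≤ ((n - (q + 1)).choose (m - (q + 1)) * m) * n ^ (q + 1) :=
          Nat.mul_le_mul_right _ step
      _ = m * ((n - (q + 1)).choose (m - (q + 1)) * n ^ (q + 1)) := by ring
      _ ≤ m * (n.choose m * m ^ (q + 1)) :=
          Nat.mul_le_mul_left _ (ih m n (by omega) h2)
      _ = n.choose m * m ^ (q + 1 + 1) := by ring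

theorem stmt_9 (q m n : ℕ) (hq : 1 ≤ q) (hqm : q ≤ m) (hmn : m ≤ n) :
    (∑ k ∈ Finset.Icc (q + 1) m,
        (m.choose k : ℝ) * ((n - m).choose (m - k) : ℝ) * ((k : ℝ) / (m : ℝ)))
      = ∑ k ∈ Finset.Icc q (m - 1),
          ((m - 1).choose k : ℝ) * ((n - m).choose (m - 1 - k) : ℝ) ∧
    (∑ k ∈ Finset.Icc q (m - 1),
        ((m - 1).choose k : ℝ) * ((n - m).choose (m - 1 - k) : ℝ))
      ≤ ((m - 1).choose q : ℝ) * ((n - q - 1).choose (m - q - 1) : ℝ) ∧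
    ((n.choose m : ℝ))⁻¹ * ∑ k ∈ Finset.Icc (q + 1) m,
        (m.choose k : ℝ) * ((n - m).choose (m - k) : ℝ) * ((k : ℝ) / (m : ℝ))
      ≤ ((m - 1).choose q : ℝ) * ((m : ℝ) / (n : ℝ)) ^ (q + 1) := by
  rcases eq_or_lt_of_le hqm with rfl | hlt
  · have h1 : Finset.Icc (q + 1) q = ∅ := Finset.Icc_eq_empty (by omega)
    have h2 : Finset.Icc q (q - 1) = ∅ := Finset.Icc_eq_empty (by omega)
    rw [h1, h2]
    simp only [Finset.sum_empty, mul_zero]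
    refine ⟨by norm_num, by positivity, by positivity⟩
  obtain ⟨b, rfl⟩ : ∃ b, m = q + 1 + b := ⟨m - q - 1, by omega⟩
  obtain ⟨c, rfl⟩ : ∃ c, n = q + 1 + b + c := ⟨n - (q + 1 + b), by omega⟩
  have e1 : q + 1 + b - 1 = q + b := by omega
  have e2 : q + 1 + b + c - (q + 1 + b) = c := by omega
  have e3 : q + 1 + b + c - q - 1 = b + c := by omega
  have e4 : q + 1 + b - q - 1 = b := by omega
  rw [e1, e2, e3, e4]
  -- Part A
  have hA : (∑ k ∈ Finset.Icc (q + 1) (q + 1 + b),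
        ((q + 1 + b).choose k : ℝ) * (c.choose (q + 1 + b - k) : ℝ)
          * ((k : ℝ) / ((q + 1 + b : ℕ) : ℝ)))
      = ∑ k ∈ Finset.Icc q (q + b),
          ((q + b).choose k : ℝ) * (c.choose (q + b - k) : ℝ) := by
    have hmap : Finset.Icc (q + 1) (q + 1 + b)
        = Finset.map (addRightEmbedding 1) (Finset.Icc q (q + b)) := by
      rw [Finset.map_add_right_Icc]; congr 1; omega
    rw [hmap, Finset.sum_map]
    refine Finset.sum_congr rfl fun k hk => ?_
    simp only [addRightEmbedding_apply]
    rw [show q + 1 + b = q + b + 1 from by omega,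
        show q + b + 1 - (k + 1) = q + b - k from by omega]
    have hnat := Nat.add_one_mul_choose_eq (q + b) k
    have hnatR : ((q : ℝ) + b + 1) * ((q + b).choose k : ℝ)
        = ((q + b + 1).choose (k + 1) : ℝ) * ((k : ℝ) + 1) := by
      exact_mod_cast hnat
    push_cast
    have hm : (q : ℝ) + b + 1 ≠ 0 := by positivity
    field_simp
    linear_combination (-(c.choose (q + b - k) : ℝ)) * hnatR
  -- Part B
  have hBnat : (∑ k ∈ Finset.Icc q (q + b),
        (q + b).choose k * c.choose (q + b - k))
      ≤ (q + b).choose q * (b + c).choose b := by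
    calc ∑ k ∈ Finset.Icc q (q + b), (q + b).choose k * c.choose (q + b - k)
        ≤ ∑ k ∈ Finset.Icc q (q + b),
            (q + b).choose q * (b.choose (k - q) * c.choose (q + b - k)) := by
          refine Finset.sum_le_sum fun k hk => ?_
          simp only [Finset.mem_Icc] at hk
          have h1 : (q + b).choose k * k.choose q
              = (q + b).choose q * (q + b - q).choose (k - q) :=
            Nat.choose_mul hk.1
          have h2 : q + b - q = b := by omega
          rw [h2] at h1
          have h3 : 1 ≤ k.choose q := Nat.choose_pos hk.1
          have h4 : (q + b).choose k ≤ (q + b).choose k * k.choose q :=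
            Nat.le_mul_of_pos_right _ h3
          calc (q + b).choose k * c.choose (q + b - k)
              ≤ ((q + b).choose k * k.choose q) * c.choose (q + b - k) :=
                Nat.mul_le_mul_right _ h4
            _ = (q + b).choose q * (b.choose (k - q) * c.choose (q + b - k)) := by
                rw [h1]; ring
      _ = (q + b).choose q * ∑ k ∈ Finset.Icc q (q + b),
            b.choose (k - q) * c.choose (q + b - k) := by
          rw [Finset.mul_sum]
      _ = (q + b).choose q * (b + c).choose b := by
          congr 1
          have hmap : Finset.Icc q (q + b)
              = Finset.map (addRightEmbedding q) (Finset.Icc 0 b) := by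
            rw [Finset.map_add_right_Icc]; congr 1 <;> omega
          rw [hmap, Finset.sum_map]
          have hIr : Finset.Icc 0 b = Finset.range (b + 1) := by
            ext x; simp [Nat.lt_succ_iff]
          rw [hIr]
          rw [Nat.add_choose_eq, Finset.Nat.sum_antidiagonal_eq_sum_range_succ_mk]
          refine Finset.sum_congr rfl fun j hj => ?_
          simp only [Finset.mem_range] at hj
          simp only [addRightEmbedding_apply]
          have h5 : j + q - q = j := by omega
          have h6 : q + b - (j + q) = b - j := by omega
          rw [h5, h6]
  have hB : (∑ k ∈ Finset.Icc q (q + b),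
        ((q + b).choose k : ℝ) * (c.choose (q + b - k) : ℝ))
      ≤ ((q + b).choose q : ℝ) * ((b + c).choose b : ℝ) := by
    exact_mod_cast hBnat
  refine ⟨hA, hB, ?_⟩
  rw [hA]
  set T := ∑ k ∈ Finset.Icc q (q + b),
      ((q + b).choose k : ℝ) * (c.choose (q + b - k) : ℝ) with hT
  have hTnn : 0 ≤ T := by
    apply Finset.sum_nonneg; intro k _; positivity
  have hCpos : (0 : ℝ) < ((q + 1 + b + c).choose (q + 1 + b) : ℝ) := by
    exact_mod_cast Nat.choose_pos (by omega)
  have hnpos : (0 : ℝ) < ((q + 1 + b + c : ℕ) : ℝ) := by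
    exact_mod_cast Nat.succ_le_iff.mp (by omega : 1 ≤ q + 1 + b + c)
  have key : ((b + c).choose b : ℝ) * ((q + 1 + b + c : ℕ) : ℝ) ^ (q + 1)
      ≤ ((q + 1 + b + c).choose (q + 1 + b) : ℝ) * ((q + 1 + b : ℕ) : ℝ) ^ (q + 1) := by
    have := aux2 q (q + 1 + b) (q + 1 + b + c) (by omega) (by omega)
    rw [show q + 1 + b + c - (q + 1) = b + c by omega,
        show q + 1 + b - (q + 1) = b by omega] at this
    exact_mod_cast this
  have hA0 : (0 : ℝ) ≤ ((q + b).choose q : ℝ) := by positivity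
  rw [inv_mul_le_iff₀ hCpos]
  calc T ≤ ((q + b).choose q : ℝ) * ((b + c).choose b : ℝ) := hB
    _ ≤ ((q + 1 + b + c).choose (q + 1 + b) : ℝ)
          * (((q + b).choose q : ℝ)
            * (((q + 1 + b : ℕ) : ℝ) / ((q + 1 + b + c : ℕ) : ℝ)) ^ (q + 1)) := by
        rw [div_pow, ← mul_div_assoc, ← mul_div_assoc, le_div_iff₀ (by positivity)]
        calc ((q + b).choose q : ℝ) * ((b + c).choose b : ℝ)
              * ((q + 1 + b + c : ℕ) : ℝ) ^ (q + 1)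
            = ((q + b).choose q : ℝ)
              * (((b + c).choose b : ℝ) * ((q + 1 + b + c : ℕ) : ℝ) ^ (q + 1)) := by ring
          _ ≤ ((q + b).choose q : ℝ)
              * (((q + 1 + b + c).choose (q + 1 + b) : ℝ)
                * ((q + 1 + b : ℕ) : ℝ) ^ (q + 1)) := by
              exact mul_le_mul_of_nonneg_left key hA0
          _ = ((q + 1 + b + c).choose (q + 1 + b) : ℝ) * (((q + b).choose q : ℝ)
                * ((q + 1 + b : ℕ) : ℝ) ^ (q + 1)) := by ring
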